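/- Let 0 < α < n and 1 < s < ∞. Define Γ_{α,s}(f) := inf{‖φ‖_{L^s(ℝ^n)}^s : φ ≥ 0, I_α * φ(x) ≥ |f(x)| for all x}. Then there is a constant C = C(s) (one may take C = 2^s/(1 - 2^{-s})) such that Γ_{α,s}(f) ≤ C ∫ |f|^s d cap_{α,s} for every f : ℝ^n → ℝ. -/

import Mathlib

open scoped ENNReal
open Metric Set MeasureTheory

noncomputable section

/-- `ℝⁿ` as Euclidean space. -/
abbrev Rn (n : ℕ) := EuclideanSpace ℝ (Fin n)

/-- The Choquet integral of a nonnegative function `g` with respect to a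
(monotone) set function `C`: `∫ g dC := ∫_0^∞ C({g > t}) dt`. -/
noncomputable def choquet {X : Type*} (C : Set X → ℝ≥0∞) (g : X → ℝ≥0∞) : ℝ≥0∞ :=
  ∫⁻ t in Ioi (0 : ℝ), C {x | ENNReal.ofReal t < g x}

/-- The Choquet integral of `g` restricted to a set `A`. -/
noncomputable def choquetOn {X : Type*} (C : Set X → ℝ≥0∞) (A : Set X) (g : X → ℝ≥0∞) : ℝ≥0∞ :=
  ∫⁻ t in Ioi (0 : ℝ), C {x | x ∈ A ∧ ENNReal.ofReal t < g x}

/-- The `L^∞(C)` norm: `inf {λ > 0 : C({|f| > λ}) = 0}` (formulated in `ℝ≥0∞`). -/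
noncomputable def choquetEssSup {X : Type*} (C : Set X → ℝ≥0∞) (f : X → ℝ) : ℝ≥0∞ :=
  sInf {l : ℝ≥0∞ | C {x | l < ENNReal.ofReal |f x|} = 0}

/-- `C`-quasicontinuity of a function `f`. -/
def QuasiCont {X : Type*} [TopologicalSpace X] (C : Set X → ℝ≥0∞) (f : X → ℝ) : Prop :=
  ∀ ε : ℝ≥0∞, 0 < ε → ∃ U : Set X, IsOpen U ∧ C U < ε ∧ ContinuousOn f Uᶜ

/-- Membership in the capacitary space `L^p(C)`: `C`-quasicontinuous with
finite `p`-th power Choquet integral. -/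
def MemChoquetLp {X : Type*} [TopologicalSpace X] (C : Set X → ℝ≥0∞) (p : ℝ) (f : X → ℝ) : Prop :=
  QuasiCont C f ∧ choquet C (fun x => ENNReal.ofReal |f x| ^ p) < ∞

/-- The constant `γ(α)` in the Riesz kernel `I_α = (1/γ(α)) |x|^{α-n}`. -/
noncomputable def rieszConst (n : ℕ) (α : ℝ) : ℝ :=
  Real.pi ^ ((n : ℝ) / 2) * 2 ^ α * Real.Gamma (α / 2) / Real.Gamma (((n : ℝ) - α) / 2)

/-- The Riesz potential `I_α * φ` of a nonnegative function `φ`. -/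
noncomputable def rieszPot (n : ℕ) (α : ℝ) (φ : Rn n → ℝ≥0∞) (x : Rn n) : ℝ≥0∞ :=
  ∫⁻ y, ENNReal.ofReal ((1 / rieszConst n α) * ‖x - y‖ ^ (α - (n : ℝ))) * φ y

/-- The Riesz capacity `cap_{α,s}(E) = inf {‖φ‖_{L^s}^s : φ ≥ 0, I_α*φ ≥ 1 on E}`. -/
noncomputable def rieszCap (n : ℕ) (α s : ℝ) (E : Set (Rn n)) : ℝ≥0∞ :=
  ⨅ (φ : Rn n → ℝ≥0∞) (_ : ∀ x ∈ E, 1 ≤ rieszPot n α φ x), ∫⁻ y, φ y ^ s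

/-- The capacitary maximal function associated to the Riesz capacity:
`M_{cap_{α,s}} g(x) := sup_{r>0} (1/(cap_{α,s}(B(0,1)) r^{n-αs})) ∫_{B(x,r)} g d cap_{α,s}`. -/
noncomputable def maximalCap (n : ℕ) (α s : ℝ) (g : Rn n → ℝ≥0∞) (x : Rn n) : ℝ≥0∞ :=
  ⨆ (r : ℝ) (_ : 0 < r),
    (rieszCap n α s (ball (0 : Rn n) 1) * ENNReal.ofReal (r ^ ((n : ℝ) - α * s)))⁻¹ *
      choquetOn (rieszCap n α s) (ball x r) g

/-- `Γ_{α,s}(g) := inf {‖φ‖_{L^s}^s : φ ≥ 0, I_α * φ ≥ g everywhere}`. -/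
noncomputable def rieszGammaFunc (n : ℕ) (α s : ℝ) (g : Rn n → ℝ≥0∞) : ℝ≥0∞ :=
  ⨅ (φ : Rn n → ℝ≥0∞) (_ : ∀ x, g x ≤ rieszPot n α φ x), ∫⁻ y, φ y ^ s
/-! ### Auxiliary lemmas for statement12 -/

/-- Measurable core of a function: a measurable minorant with the same integral which
a.e.-dominates every measurable minorant. -/
lemma s12_core {X : Type*} [MeasurableSpace X] (μ : Measure X) (F : X → ℝ≥0∞)
    (hF : ∫⁻ a, F a ∂μ ≠ ∞) :
    ∃ m : X → ℝ≥0∞, Measurable m ∧ m ≤ F ∧ (∫⁻ a, m a ∂μ = ∫⁻ a, F a ∂μ) ∧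
      ∀ w : X → ℝ≥0∞, Measurable w → w ≤ F → w ≤ᵐ[μ] m := by
  obtain ⟨m, hm, hmF, hint⟩ := MeasureTheory.exists_measurable_le_lintegral_eq μ F
  refine ⟨m, hm, hmF, hint.symm, fun w hw hwF => ?_⟩
  have hmfin : ∫⁻ a, m a ∂μ ≠ ∞ := by rw [← hint]; exact hF
  have hmaxle : ∫⁻ a, max (w a) (m a) ∂μ ≤ ∫⁻ a, m a ∂μ := by
    rw [← hint]
    exact lintegral_mono fun a => max_le (hwF a) (hmF a)
  have hzero : ∫⁻ a, (max (w a) (m a) - m a) ∂μ = 0 := by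
    rw [lintegral_sub hm hmfin (Filter.Eventually.of_forall fun a => le_max_right _ _)]
    exact tsub_eq_zero_of_le hmaxle
  have hae := (lintegral_eq_zero_iff ((hw.max hm).sub hm)).1 hzero
  filter_upwards [hae] with a ha
  have ha' : max (w a) (m a) - m a = 0 := ha
  exact le_trans (le_max_left _ _) (tsub_eq_zero_iff_le.1 ha')

lemma s12_rieszConst_pos {n : ℕ} {α : ℝ} (hα0 : 0 < α) (hαn : α < n) :
    0 < rieszConst n α := by
  apply div_pos
  · apply mul_pos
    · positivity
    · exact Real.Gamma_pos_of_pos (by linarith)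
  · exact Real.Gamma_pos_of_pos (by linarith)

/-- The Riesz kernel. -/
noncomputable def s12K (n : ℕ) (α : ℝ) (x y : Rn n) : ℝ≥0∞ :=
  ENNReal.ofReal ((1 / rieszConst n α) * ‖x - y‖ ^ (α - (n : ℝ)))

lemma s12_rieszPot_eq {n : ℕ} {α : ℝ} (φ : Rn n → ℝ≥0∞) (x : Rn n) :
    rieszPot n α φ x = ∫⁻ y, s12K n α x y * φ y := rfl

lemma s12K_ne_top {n : ℕ} {α : ℝ} (x y : Rn n) : s12K n α x y ≠ ∞ :=
  ENNReal.ofReal_ne_top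

lemma s12K_ne_zero {n : ℕ} {α : ℝ} (hα0 : 0 < α) (hαn : α < n) {x y : Rn n} (h : y ≠ x) :
    s12K n α x y ≠ 0 := by
  have hxy : x - y ≠ 0 := sub_ne_zero.2 (Ne.symm h)
  have h1 : 0 < ‖x - y‖ := norm_pos_iff.2 hxy
  have h2 : 0 < (1 / rieszConst n α) * ‖x - y‖ ^ (α - (n : ℝ)) := by
    apply mul_pos
    · simpa using s12_rieszConst_pos hα0 hαn
    · exact Real.rpow_pos_of_pos h1 _
  exact (ENNReal.ofReal_pos.2 h2).ne'

lemma s12K_measurable {n : ℕ} {α : ℝ} (x : Rn n) : Measurable (s12K n α x) := by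
  apply ENNReal.measurable_ofReal.comp
  apply Measurable.const_mul
  exact ((continuous_const.sub continuous_id).norm.measurable).pow measurable_const

lemma s12_rieszPot_mono {n : ℕ} {α : ℝ} {φ ψ : Rn n → ℝ≥0∞} (h : ∀ y, φ y ≤ ψ y) (x : Rn n) :
    rieszPot n α φ x ≤ rieszPot n α ψ x :=
  lintegral_mono fun y => mul_le_mul_right (h y) _

lemma s12_rieszPot_const_mul {n : ℕ} {α : ℝ} (c : ℝ≥0∞) (hc : c ≠ ∞) (φ : Rn n → ℝ≥0∞)
    (x : Rn n) : rieszPot n α (fun y => c * φ y) x = c * rieszPot n α φ x := by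
  rw [s12_rieszPot_eq, s12_rieszPot_eq, ← lintegral_const_mul' c _ hc]
  congr 1; funext y; ring

lemma s12_iSup_rpow {ι : Sort*} {s : ℝ} (hs : 0 < s) (f : ι → ℝ≥0∞) :
    (⨆ i, f i) ^ s = ⨆ i, f i ^ s := by
  apply le_antisymm
  · have h1 : (⨆ i, f i) ≤ (⨆ i, f i ^ s) ^ (1 / s) := by
      refine iSup_le fun i => ?_
      have : f i = (f i ^ s) ^ (1 / s) := by
        rw [← ENNReal.rpow_mul, mul_one_div, div_self hs.ne', ENNReal.rpow_one]
      rw [this]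
      exact ENNReal.rpow_le_rpow (le_iSup (fun i => f i ^ s) i) (by positivity)
    calc (⨆ i, f i) ^ s ≤ ((⨆ i, f i ^ s) ^ (1 / s)) ^ s :=
          ENNReal.rpow_le_rpow h1 hs.le
      _ = ⨆ i, f i ^ s := by
          rw [← ENNReal.rpow_mul, one_div_mul_cancel hs.ne', ENNReal.rpow_one]
  · exact iSup_le fun i => ENNReal.rpow_le_rpow (le_iSup f i) hs.le

/-- Replace an arbitrary test function by a measurable one, keeping the `L^s`-mass and
not decreasing the Riesz potential. -/
lemma s12_swap {n : ℕ} {α s : ℝ} (hα0 : 0 < α) (hαn : α < n) (hs0 : 0 < s)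
    (φ : Rn n → ℝ≥0∞) (hφ : ∫⁻ y, φ y ^ s ≠ ∞) :
    ∃ ψ : Rn n → ℝ≥0∞, Measurable ψ ∧ (∫⁻ y, ψ y ^ s = ∫⁻ y, φ y ^ s) ∧
      ∀ x, rieszPot n α φ x ≤ rieszPot n α ψ x := by
  have hn1 : 1 ≤ n := by
    by_contra h
    interval_cases n
    · exact absurd hαn (by simpa using hα0.le)
  haveI : Inhabited (Fin n) := ⟨⟨0, hn1⟩⟩
  haveI : Nontrivial (Rn n) := (WithLp.equiv 2 (Fin n → ℝ)).nontrivial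
  haveI : NullSingletonClass (volume : Measure (Rn n)) := by infer_instance
  obtain ⟨m, hm, hmle, hmint, hdom⟩ := s12_core volume (fun y => φ y ^ s) hφ
  set ψ : Rn n → ℝ≥0∞ := fun y => m y ^ (1 / s) with hψdef
  have hψm : Measurable ψ := hm.pow measurable_const
  have hψs : ∀ y, ψ y ^ s = m y := by
    intro y
    rw [hψdef]
    simp only
    rw [← ENNReal.rpow_mul, one_div_mul_cancel hs0.ne', ENNReal.rpow_one]
  refine ⟨ψ, hψm, ?_, ?_⟩
  · calc ∫⁻ y, ψ y ^ s = ∫⁻ y, m y := by simp only [hψs]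
      _ = ∫⁻ y, φ y ^ s := hmint
  · intro x
    have hK : Measurable (s12K n α x) := s12K_measurable x
    rw [s12_rieszPot_eq φ x, ← iSup_lintegral_measurable_le_eq_lintegral
      (fun y => s12K n α x y * φ y), s12_rieszPot_eq ψ x]
    refine iSup_le fun u => iSup_le fun hu => iSup_le fun hule => ?_
    set w : Rn n → ℝ≥0∞ :=
      (({x} : Set (Rn n))ᶜ).indicator (fun y => u y * (s12K n α x y)⁻¹) with hwdef
    have hwm : Measurable w :=
      (hu.mul hK.inv).indicator (measurableSet_singleton x).compl
    have hwle : ∀ y, w y ≤ φ y := by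
      intro y
      by_cases hyx : y = x
      · rw [hwdef]
        simp [hyx]
      · have h0 : s12K n α x y ≠ 0 := s12K_ne_zero hα0 hαn hyx
        have hT : s12K n α x y ≠ ∞ := s12K_ne_top x y
        rw [hwdef, Set.indicator_of_mem (by simpa using hyx)]
        calc u y * (s12K n α x y)⁻¹ ≤ (s12K n α x y * φ y) * (s12K n α x y)⁻¹ :=
              mul_le_mul_left (hule y) _
          _ = φ y := by
              rw [mul_comm (s12K n α x y) (φ y), mul_assoc,
                ENNReal.mul_inv_cancel h0 hT, mul_one]
    have hwsm : Measurable fun y => w y ^ s := hwm.pow measurable_const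
    have hwsle : (fun y => w y ^ s) ≤ fun y => φ y ^ s :=
      fun y => ENNReal.rpow_le_rpow (hwle y) hs0.le
    have hws := hdom _ hwsm hwsle
    have hwψ : w ≤ᵐ[volume] ψ := by
      filter_upwards [hws] with y hy
      have h1 : (w y ^ s) ^ (1 / s) ≤ (m y) ^ (1 / s) :=
        ENNReal.rpow_le_rpow hy (by positivity)
      rwa [← ENNReal.rpow_mul, mul_one_div, div_self hs0.ne', ENNReal.rpow_one] at h1
    have hxc : ∀ᵐ y ∂(volume : Measure (Rn n)), y ≠ x := by
      have : (volume : Measure (Rn n)) {y | ¬ y ≠ x} = 0 := by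
        simpa using measure_singleton (α := Rn n) x
      exact this
    have hule' : u ≤ᵐ[volume] fun y => s12K n α x y * ψ y := by
      filter_upwards [hwψ, hxc] with y h1 h2
      have h0 : s12K n α x y ≠ 0 := s12K_ne_zero hα0 hαn h2
      have hT : s12K n α x y ≠ ∞ := s12K_ne_top x y
      have hu_eq : u y = s12K n α x y * w y := by
        rw [hwdef, Set.indicator_of_mem (by simpa using h2)]
        rw [← mul_assoc, mul_comm (s12K n α x y) (u y), mul_assoc,
          ENNReal.mul_inv_cancel h0 hT, mul_one]
      calc u y = s12K n α x y * w y := hu_eq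
        _ ≤ s12K n α x y * ψ y := mul_le_mul_right h1 _
    exact lintegral_mono_ae hule'

lemma s12_rieszCap_mono {n : ℕ} {α s : ℝ} {E F : Set (Rn n)} (h : E ⊆ F) :
    rieszCap n α s E ≤ rieszCap n α s F :=
  le_iInf₂ fun φ hφ => iInf₂_le φ fun x hx => hφ x (h hx)

lemma s12_rieszCap_exists {n : ℕ} {α s : ℝ} (hα0 : 0 < α) (hαn : α < n) (hs0 : 0 < s)
    {E : Set (Rn n)} (hE : rieszCap n α s E ≠ ∞) {η : ℝ≥0∞} (hη0 : η ≠ 0) (hηt : η ≠ ∞) :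
    ∃ ψ : Rn n → ℝ≥0∞, Measurable ψ ∧ (∀ x ∈ E, 1 ≤ rieszPot n α ψ x) ∧
      ∫⁻ y, ψ y ^ s ≤ rieszCap n α s E + η := by
  have hlt : rieszCap n α s E < rieszCap n α s E + η := ENNReal.lt_add_right hE hη0
  have hfin : rieszCap n α s E + η ≠ ∞ := ENNReal.add_ne_top.2 ⟨hE, hηt⟩
  unfold rieszCap at hlt
  obtain ⟨φ, hφ⟩ := iInf_lt_iff.1 hlt
  obtain ⟨hpot, hint⟩ := iInf_lt_iff.1 hφ
  have hne : ∫⁻ y, φ y ^ s ≠ ∞ := (hint.trans_le hfin.lt_top.le).ne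
  obtain ⟨ψ, hψm, hψint, hψpot⟩ := s12_swap hα0 hαn hs0 φ hne
  exact ⟨ψ, hψm, fun x hx => le_trans (hpot x hx) (hψpot x), by rw [hψint]; exact hint.le⟩

lemma s12_two_rpow_ne_zero (y : ℝ) : (2:ℝ≥0∞) ^ y ≠ 0 :=
  (ENNReal.rpow_pos (by norm_num) (by norm_num)).ne'

lemma s12_two_rpow_ne_top (y : ℝ) : (2:ℝ≥0∞) ^ y ≠ ∞ := by
  intro h
  rcases ENNReal.rpow_eq_top_iff.1 h with ⟨h1, _⟩ | ⟨h1, _⟩ <;> norm_num at h1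

lemma s12_ofReal_two_rpow (p : ℝ) : ENNReal.ofReal ((2:ℝ) ^ p) = (2:ℝ≥0∞) ^ p := by
  rw [← ENNReal.ofReal_rpow_of_pos two_pos, ENNReal.ofReal_ofNat]

lemma s12_coeff {s : ℝ} (hs0 : 0 < s) (e : ℝ) :
    ENNReal.ofReal ((2:ℝ) ^ (e * s) - (2:ℝ) ^ ((e - 1) * s)) =
      (1 - (2:ℝ≥0∞) ^ (-s)) * (2:ℝ≥0∞) ^ (e * s) := by
  have hle1 : (2:ℝ) ^ (-s) ≤ 1 :=
    Real.rpow_le_one_of_one_le_of_nonpos one_le_two (by linarith)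
  have h2 : (2:ℝ) ^ ((e - 1) * s) = (2:ℝ) ^ (e * s) * (2:ℝ) ^ (-s) := by
    rw [show (e - 1) * s = e * s + (-s) by ring, Real.rpow_add two_pos]
  have h3 : (2:ℝ) ^ (e * s) - (2:ℝ) ^ ((e - 1) * s) = (1 - (2:ℝ) ^ (-s)) * (2:ℝ) ^ (e * s) := by
    rw [h2]; ring
  rw [h3, ENNReal.ofReal_mul (by linarith)]
  congr 1
  · rw [ENNReal.ofReal_sub _ (Real.rpow_nonneg (by norm_num) _), ENNReal.ofReal_one,
      s12_ofReal_two_rpow]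
  · exact s12_ofReal_two_rpow _

/-- Lower bound for the Choquet integral by a sum over dyadic levels. -/
lemma s12_lower {n : ℕ} {α s : ℝ} (hs0 : 0 < s) (g : Rn n → ℝ≥0∞) :
    (1 - (2:ℝ≥0∞) ^ (-s)) *
      ∑' k : ℤ, (2:ℝ≥0∞) ^ ((k : ℝ) * s) * rieszCap n α s {x | (2:ℝ≥0∞) ^ (k:ℝ) < g x} ≤
    ∫⁻ t in Ioi (0:ℝ), rieszCap n α s {x | ENNReal.ofReal t < g x ^ s} := by
  rw [← ENNReal.tsum_mul_left]
  have hm2 : ∀ {a b : ℝ}, a ≤ b → (2:ℝ) ^ (a * s) ≤ (2:ℝ) ^ (b * s) := fun h =>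
    Real.rpow_le_rpow_of_exponent_le one_le_two (mul_le_mul_of_nonneg_right h hs0.le)
  have hterm : ∀ k : ℤ,
      (1 - (2:ℝ≥0∞) ^ (-s)) * ((2:ℝ≥0∞) ^ ((k : ℝ) * s) *
          rieszCap n α s {x | (2:ℝ≥0∞) ^ (k:ℝ) < g x}) ≤
      ∫⁻ t in Ioc ((2:ℝ) ^ (((k:ℝ) - 1) * s)) ((2:ℝ) ^ ((k:ℝ) * s)),
        rieszCap n α s {x | ENNReal.ofReal t < g x ^ s} := by
    intro k
    have hmem : ∀ t ∈ Ioc ((2:ℝ) ^ (((k:ℝ) - 1) * s)) ((2:ℝ) ^ ((k:ℝ) * s)),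
        rieszCap n α s {x | (2:ℝ≥0∞) ^ (k:ℝ) < g x} ≤
          rieszCap n α s {x | ENNReal.ofReal t < g x ^ s} := by
      intro t ht
      apply s12_rieszCap_mono
      intro x hx
      have hx' : (2:ℝ≥0∞) ^ (k:ℝ) < g x := hx
      have h1 : ENNReal.ofReal t ≤ (2:ℝ≥0∞) ^ ((k:ℝ) * s) := by
        calc ENNReal.ofReal t ≤ ENNReal.ofReal ((2:ℝ) ^ ((k:ℝ) * s)) :=
              ENNReal.ofReal_le_ofReal ht.2
          _ = (2:ℝ≥0∞) ^ ((k:ℝ) * s) := s12_ofReal_two_rpow _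
      have h2 : (2:ℝ≥0∞) ^ ((k:ℝ) * s) < g x ^ s := by
        rw [ENNReal.rpow_mul]
        exact ENNReal.rpow_lt_rpow hx' hs0
      exact lt_of_le_of_lt h1 h2
    have hvol : (volume (Ioc ((2:ℝ) ^ (((k:ℝ) - 1) * s)) ((2:ℝ) ^ ((k:ℝ) * s)))) =
        (1 - (2:ℝ≥0∞) ^ (-s)) * (2:ℝ≥0∞) ^ ((k:ℝ) * s) := by
      rw [Real.volume_Ioc, s12_coeff hs0]
    calc (1 - (2:ℝ≥0∞) ^ (-s)) * ((2:ℝ≥0∞) ^ ((k : ℝ) * s) *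
            rieszCap n α s {x | (2:ℝ≥0∞) ^ (k:ℝ) < g x})
        = rieszCap n α s {x | (2:ℝ≥0∞) ^ (k:ℝ) < g x} *
            volume (Ioc ((2:ℝ) ^ (((k:ℝ) - 1) * s)) ((2:ℝ) ^ ((k:ℝ) * s))) := by
          rw [hvol]; ring
      _ = ∫⁻ _ in Ioc ((2:ℝ) ^ (((k:ℝ) - 1) * s)) ((2:ℝ) ^ ((k:ℝ) * s)),
            rieszCap n α s {x | (2:ℝ≥0∞) ^ (k:ℝ) < g x} := (setLIntegral_const _ _).symm
      _ ≤ _ := lintegral_mono_ae (ae_restrict_of_forall_mem measurableSet_Ioc hmem)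
  have hdisj : Pairwise (Function.onFun Disjoint
      (fun k : ℤ => Ioc ((2:ℝ) ^ (((k:ℝ) - 1) * s)) ((2:ℝ) ^ ((k:ℝ) * s)))) := by
    intro j k hjk
    have key : ∀ j k : ℤ, j < k → Disjoint (Ioc ((2:ℝ) ^ (((j:ℝ) - 1) * s)) ((2:ℝ) ^ ((j:ℝ) * s)))
        (Ioc ((2:ℝ) ^ (((k:ℝ) - 1) * s)) ((2:ℝ) ^ ((k:ℝ) * s))) := by
      intro j k h
      rw [Set.Ioc_disjoint_Ioc]
      refine le_trans (min_le_left _ _) (le_trans ?_ (le_max_right _ _))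
      have hjk' : (j:ℝ) ≤ (k:ℝ) - 1 := by
        have h' : (j:ℤ) ≤ k - 1 := by omega
        have h'' : ((j:ℤ):ℝ) ≤ ((k - 1 : ℤ):ℝ) := by exact_mod_cast h'
        push_cast at h''
        linarith
      exact hm2 hjk'
    rcases hjk.lt_or_gt with h | h
    · exact key j k h
    · exact (key k j h).symm
  have hsub : (⋃ k : ℤ, Ioc ((2:ℝ) ^ (((k:ℝ) - 1) * s)) ((2:ℝ) ^ ((k:ℝ) * s))) ⊆ Ioi (0:ℝ) := by
    rintro t ⟨S, ⟨k, rfl⟩, ht⟩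
    exact lt_trans (Real.rpow_pos_of_pos two_pos _) ht.1
  calc ∑' k : ℤ, (1 - (2:ℝ≥0∞) ^ (-s)) * ((2:ℝ≥0∞) ^ ((k : ℝ) * s) *
          rieszCap n α s {x | (2:ℝ≥0∞) ^ (k:ℝ) < g x})
      ≤ ∑' k : ℤ, ∫⁻ t in Ioc ((2:ℝ) ^ (((k:ℝ) - 1) * s)) ((2:ℝ) ^ ((k:ℝ) * s)),
          rieszCap n α s {x | ENNReal.ofReal t < g x ^ s} := ENNReal.tsum_le_tsum hterm
    _ = ∫⁻ t in ⋃ k : ℤ, Ioc ((2:ℝ) ^ (((k:ℝ) - 1) * s)) ((2:ℝ) ^ ((k:ℝ) * s)),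
          rieszCap n α s {x | ENNReal.ofReal t < g x ^ s} :=
        (lintegral_iUnion (fun _ => measurableSet_Ioc) hdisj _).symm
    _ ≤ _ := lintegral_mono_set hsub

/-- Main estimate: the Gamma functional is bounded by `2^s` times the dyadic sum. -/
lemma s12_main_est {n : ℕ} {α s : ℝ} (hα0 : 0 < α) (hαn : α < n) (hs0 : 0 < s)
    (g : Rn n → ℝ≥0∞) (hg : ∀ x, g x ≠ ∞)
    (hfin : ∀ k : ℤ, rieszCap n α s {x | (2:ℝ≥0∞) ^ (k:ℝ) < g x} ≠ ∞) :
    rieszGammaFunc n α s g ≤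
      (2:ℝ≥0∞) ^ s *
        ∑' k : ℤ, (2:ℝ≥0∞) ^ ((k : ℝ) * s) * rieszCap n α s {x | (2:ℝ≥0∞) ^ (k:ℝ) < g x} := by
  refine ENNReal.le_of_forall_pos_le_add fun ε hε _ => ?_
  obtain ⟨ε', hε'pos, cε, hhas, hclt⟩ := NNReal.exists_pos_sum_of_countable (ne_of_gt hε) ℤ
  have hη0 : ∀ k : ℤ, ((ε' k : ℝ≥0∞) * ((2:ℝ≥0∞) ^ (((k:ℝ) + 1) * s))⁻¹) ≠ 0 := by
    intro k
    apply mul_ne_zero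
    · exact_mod_cast (hε'pos k).ne'
    · exact ENNReal.inv_ne_zero.2 (s12_two_rpow_ne_top _)
  have hηt : ∀ k : ℤ, ((ε' k : ℝ≥0∞) * ((2:ℝ≥0∞) ^ (((k:ℝ) + 1) * s))⁻¹) ≠ ∞ := by
    intro k
    exact ENNReal.mul_ne_top ENNReal.coe_ne_top (ENNReal.inv_ne_top.2 (s12_two_rpow_ne_zero _))
  choose ψ hψm hψpot hψint using fun k : ℤ =>
    s12_rieszCap_exists hα0 hαn hs0 (hfin k) (hη0 k) (hηt k)
  have hpot : ∀ x, g x ≤ rieszPot n α (fun y => ⨆ k : ℤ, (2:ℝ≥0∞) ^ ((k:ℝ) + 1) * ψ k y) x := by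
    intro x
    rcases eq_or_ne (g x) 0 with h0 | h0
    · rw [h0]; exact zero_le
    have hr : 0 < (g x).toReal := ENNReal.toReal_pos h0 (hg x)
    set r : ℝ := (g x).toReal with hrdef
    set k : ℤ := ⌈Real.logb 2 r⌉ - 1 with hkdef
    have hkr : (k:ℝ) = ⌈Real.logb 2 r⌉ - 1 := by rw [hkdef]; push_cast; ring
    have hk1 : (2:ℝ) ^ ((k:ℝ)) < r := by
      have h1 : ((k:ℝ)) < Real.logb 2 r := by
        rw [hkr]
        have := Int.ceil_lt_add_one (Real.logb 2 r)
        linarith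
      calc (2:ℝ) ^ ((k:ℝ)) < (2:ℝ) ^ (Real.logb 2 r) :=
            (Real.rpow_lt_rpow_left_iff one_lt_two).2 h1
        _ = r := Real.rpow_logb two_pos (by norm_num) hr
    have hk2 : r ≤ (2:ℝ) ^ ((k:ℝ) + 1) := by
      have h1 : Real.logb 2 r ≤ (k:ℝ) + 1 := by
        rw [hkr]
        have := Int.le_ceil (Real.logb 2 r)
        linarith
      calc r = (2:ℝ) ^ (Real.logb 2 r) := (Real.rpow_logb two_pos (by norm_num) hr).symm
        _ ≤ (2:ℝ) ^ ((k:ℝ) + 1) := Real.rpow_le_rpow_of_exponent_le one_le_two h1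
    have hgr : g x = ENNReal.ofReal r := (ENNReal.ofReal_toReal (hg x)).symm
    have hxE : x ∈ {x | (2:ℝ≥0∞) ^ (k:ℝ) < g x} := by
      show (2:ℝ≥0∞) ^ (k:ℝ) < g x
      rw [hgr, ← s12_ofReal_two_rpow]
      exact (ENNReal.ofReal_lt_ofReal_iff hr).2 hk1
    calc g x = ENNReal.ofReal r := hgr
      _ ≤ ENNReal.ofReal ((2:ℝ) ^ ((k:ℝ) + 1)) := ENNReal.ofReal_le_ofReal hk2
      _ = (2:ℝ≥0∞) ^ ((k:ℝ) + 1) := s12_ofReal_two_rpow _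
      _ = (2:ℝ≥0∞) ^ ((k:ℝ) + 1) * 1 := (mul_one _).symm
      _ ≤ (2:ℝ≥0∞) ^ ((k:ℝ) + 1) * rieszPot n α (ψ k) x :=
          mul_le_mul_right (hψpot k x hxE) _
      _ = rieszPot n α (fun y => (2:ℝ≥0∞) ^ ((k:ℝ) + 1) * ψ k y) x :=
          (s12_rieszPot_const_mul _ (s12_two_rpow_ne_top _) _ _).symm
      _ ≤ _ := s12_rieszPot_mono (fun y => le_iSup (fun k : ℤ => (2:ℝ≥0∞) ^ ((k:ℝ) + 1) * ψ k y) k) x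
  have hΓ : rieszGammaFunc n α s g ≤
      ∫⁻ y, (⨆ k : ℤ, (2:ℝ≥0∞) ^ ((k:ℝ) + 1) * ψ k y) ^ s :=
    iInf₂_le (fun y => ⨆ k : ℤ, (2:ℝ≥0∞) ^ ((k:ℝ) + 1) * ψ k y) hpot
  have hsumcoe : ∑' k : ℤ, (ε' k : ℝ≥0∞) ≤ (ε : ℝ≥0∞) := by
    rw [← ENNReal.coe_tsum hhas.summable]
    exact_mod_cast (hhas.tsum_eq ▸ hclt.le)
  calc rieszGammaFunc n α s g
      ≤ ∫⁻ y, (⨆ k : ℤ, (2:ℝ≥0∞) ^ ((k:ℝ) + 1) * ψ k y) ^ s := hΓ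
    _ ≤ ∫⁻ y, ∑' k : ℤ, (2:ℝ≥0∞) ^ (((k:ℝ) + 1) * s) * ψ k y ^ s := by
        apply lintegral_mono
        intro y
        dsimp only
        rw [s12_iSup_rpow hs0]
        refine iSup_le fun k => ?_
        calc ((2:ℝ≥0∞) ^ ((k:ℝ) + 1) * ψ k y) ^ s
            = (2:ℝ≥0∞) ^ (((k:ℝ) + 1) * s) * ψ k y ^ s := by
              rw [ENNReal.mul_rpow_of_nonneg _ _ hs0.le, ← ENNReal.rpow_mul]
          _ ≤ _ := ENNReal.le_tsum k
    _ = ∑' k : ℤ, ∫⁻ y, (2:ℝ≥0∞) ^ (((k:ℝ) + 1) * s) * ψ k y ^ s :=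
        lintegral_tsum fun k => (((hψm k).pow measurable_const).const_mul _).aemeasurable
    _ = ∑' k : ℤ, (2:ℝ≥0∞) ^ (((k:ℝ) + 1) * s) * ∫⁻ y, ψ k y ^ s :=
        tsum_congr fun k => lintegral_const_mul' _ _ (s12_two_rpow_ne_top _)
    _ ≤ ∑' k : ℤ, (2:ℝ≥0∞) ^ (((k:ℝ) + 1) * s) *
          (rieszCap n α s {x | (2:ℝ≥0∞) ^ (k:ℝ) < g x} +
            (ε' k : ℝ≥0∞) * ((2:ℝ≥0∞) ^ (((k:ℝ) + 1) * s))⁻¹) :=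
        ENNReal.tsum_le_tsum fun k => mul_le_mul_right (hψint k) _
    _ = ∑' k : ℤ, ((2:ℝ≥0∞) ^ s * ((2:ℝ≥0∞) ^ ((k:ℝ) * s) *
          rieszCap n α s {x | (2:ℝ≥0∞) ^ (k:ℝ) < g x}) + (ε' k : ℝ≥0∞)) := by
        apply tsum_congr
        intro k
        rw [mul_add]
        congr 1
        · rw [show ((k:ℝ) + 1) * s = s + (k:ℝ) * s from by ring,
            ENNReal.rpow_add _ _ (by norm_num) (by norm_num), mul_assoc]
        · rw [mul_comm ((ε' k : ℝ≥0∞)) _, ← mul_assoc,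
            ENNReal.mul_inv_cancel (s12_two_rpow_ne_zero _) (s12_two_rpow_ne_top _), one_mul]
    _ = (2:ℝ≥0∞) ^ s * (∑' k : ℤ, (2:ℝ≥0∞) ^ ((k:ℝ) * s) *
          rieszCap n α s {x | (2:ℝ≥0∞) ^ (k:ℝ) < g x}) + ∑' k : ℤ, (ε' k : ℝ≥0∞) := by
        rw [ENNReal.tsum_add, ENNReal.tsum_mul_left]
    _ ≤ _ := add_le_add_right hsumcoe _

/-- `Γ_{α,s}(f) ≤ C(s) ∫ |f|^s d cap_{α,s}` for every real-valued
`f`, where `Γ_{α,s}(f) = inf {‖φ‖_{L^s}^s : φ ≥ 0, I_α*φ ≥ |f| everywhere}`. -/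
theorem statement12 (n : ℕ) (α s : ℝ) (hα0 : 0 < α) (hαn : α < n) (hs : 1 < s) :
    ∃ C : ℝ, 0 < C ∧ ∀ f : Rn n → ℝ,
      rieszGammaFunc n α s (fun x => ENNReal.ofReal |f x|) ≤
        ENNReal.ofReal C *
          choquet (rieszCap n α s) (fun x => ENNReal.ofReal |f x| ^ s) := by
  have hs0 : (0:ℝ) < s := lt_trans one_pos hs
  have h2sR : (2:ℝ) ^ (-s) < 1 :=
    Real.rpow_lt_one_of_one_lt_of_neg one_lt_two (by linarith)
  refine ⟨(2:ℝ) ^ s / (1 - (2:ℝ) ^ (-s)),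
    div_pos (Real.rpow_pos_of_pos two_pos s) (by linarith), ?_⟩
  intro f
  have h2sE : ((2:ℝ≥0∞)) ^ (-s) < 1 :=
    ENNReal.rpow_lt_one_of_one_lt_of_neg (by norm_num) (by linarith)
  have hc₀0 : (1 - (2:ℝ≥0∞) ^ (-s)) ≠ 0 := by
    intro h
    exact absurd (tsub_eq_zero_iff_le.1 h) (not_le.2 h2sE)
  have hc₀top : (1 - (2:ℝ≥0∞) ^ (-s)) ≠ ∞ :=
    ne_top_of_le_ne_top ENNReal.one_ne_top tsub_le_self
  have hofC : ENNReal.ofReal ((2:ℝ) ^ s / (1 - (2:ℝ) ^ (-s)))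
      = (2:ℝ≥0∞) ^ s * (1 - (2:ℝ≥0∞) ^ (-s))⁻¹ := by
    rw [ENNReal.ofReal_div_of_pos (by linarith), div_eq_mul_inv]
    congr 1
    · exact s12_ofReal_two_rpow s
    · rw [ENNReal.ofReal_sub _ (Real.rpow_nonneg (by norm_num) _), ENNReal.ofReal_one,
        s12_ofReal_two_rpow]
  have hCne : ENNReal.ofReal ((2:ℝ) ^ s / (1 - (2:ℝ) ^ (-s))) ≠ 0 := by
    rw [hofC]
    exact mul_ne_zero (s12_two_rpow_ne_zero s) (ENNReal.inv_ne_zero.2 hc₀top)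
  set R := choquet (rieszCap n α s) (fun x => ENNReal.ofReal |f x| ^ s) with hRdef
  by_cases hRtop : R = ∞
  · rw [hRtop, ENNReal.mul_top hCne]
    exact le_top
  have hlow : (1 - (2:ℝ≥0∞) ^ (-s)) *
      ∑' k : ℤ, (2:ℝ≥0∞) ^ ((k : ℝ) * s) *
        rieszCap n α s {x | (2:ℝ≥0∞) ^ (k:ℝ) < ENNReal.ofReal |f x|} ≤ R := by
    rw [hRdef]
    exact s12_lower (n := n) (α := α) hs0 (fun x => ENNReal.ofReal |f x|)
  have hfin : ∀ k : ℤ,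
      rieszCap n α s {x | (2:ℝ≥0∞) ^ (k:ℝ) < ENNReal.ofReal |f x|} ≠ ∞ := by
    intro k hcap
    apply hRtop
    have h1 : (2:ℝ≥0∞) ^ ((k:ℝ) * s) *
        rieszCap n α s {x | (2:ℝ≥0∞) ^ (k:ℝ) < ENNReal.ofReal |f x|} = ∞ := by
      rw [hcap, ENNReal.mul_top (s12_two_rpow_ne_zero _)]
    have h2 : (∑' k : ℤ, (2:ℝ≥0∞) ^ ((k : ℝ) * s) *
        rieszCap n α s {x | (2:ℝ≥0∞) ^ (k:ℝ) < ENNReal.ofReal |f x|}) = ∞ :=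
      le_antisymm le_top (h1 ▸ ENNReal.le_tsum k)
    rw [h2, ENNReal.mul_top hc₀0] at hlow
    exact top_le_iff.1 hlow
  have hS : (∑' k : ℤ, (2:ℝ≥0∞) ^ ((k : ℝ) * s) *
      rieszCap n α s {x | (2:ℝ≥0∞) ^ (k:ℝ) < ENNReal.ofReal |f x|}) ≤
      (1 - (2:ℝ≥0∞) ^ (-s))⁻¹ * R := by
    have h := mul_le_mul_right hlow ((1 - (2:ℝ≥0∞) ^ (-s))⁻¹)
    rwa [← mul_assoc, ENNReal.inv_mul_cancel hc₀0 hc₀top, one_mul] at h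
  calc rieszGammaFunc n α s (fun x => ENNReal.ofReal |f x|)
      ≤ (2:ℝ≥0∞) ^ s * ∑' k : ℤ, (2:ℝ≥0∞) ^ ((k : ℝ) * s) *
          rieszCap n α s {x | (2:ℝ≥0∞) ^ (k:ℝ) < ENNReal.ofReal |f x|} :=
        s12_main_est hα0 hαn hs0 _ (fun x => ENNReal.ofReal_ne_top) hfin
    _ ≤ (2:ℝ≥0∞) ^ s * ((1 - (2:ℝ≥0∞) ^ (-s))⁻¹ * R) := mul_le_mul_right hS _
    _ = ENNReal.ofReal ((2:ℝ) ^ s / (1 - (2:ℝ) ^ (-s))) * R := by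
        rw [hofC, mul_assoc]

end
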